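/- In a 4-way latin square of order 5, no row can consist entirely of fixed cells while another row has exactly 1 fixed cell. -/

import Mathlib

/-- A μ-way latin square of order n: μ latin squares on symbols `Fin n` such that
in every cell the μ entries are all equal or pairwise distinct. -/
def IsMuWayLatinSquare {μ n : ℕ} (L : Fin μ → Fin n → Fin n → Fin n) : Prop :=
  (∀ m i, Function.Injective (L m i)) ∧
  (∀ m j, Function.Injective (fun i => L m i j)) ∧
  (∀ i j, (∀ a b, L a i j = L b i j) ∨ Function.Injective (fun a => L a i j))

/-- A cell is fixed when the μ entries there coincide. -/
def IsFixedCell {μ n : ℕ} (L : Fin μ → Fin n → Fin n → Fin n) (i j : Fin n) : Prop :=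
  ∀ a b, L a i j = L b i j

instance {μ n : ℕ} (L : Fin μ → Fin n → Fin n → Fin n) (i j : Fin n) :
    Decidable (IsFixedCell L i j) :=
  inferInstanceAs (Decidable (∀ a b, L a i j = L b i j))

/-- The number of fixed cells. -/
def numFixed {μ n : ℕ} (L : Fin μ → Fin n → Fin n → Fin n) : ℕ :=
  (Finset.univ.filter fun p : Fin n × Fin n => IsFixedCell L p.1 p.2).card

/-- The number of fixed cells in row `i`. -/
def rowFixed {μ n : ℕ} (L : Fin μ → Fin n → Fin n → Fin n) (i : Fin n) : ℕ :=
  (Finset.univ.filter fun j : Fin n => IsFixedCell L i j).card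

/-- The intersection spectrum `I^μ[n]`. -/
def Spectrum (μ n : ℕ) : Set ℕ :=
  {k | ∃ L : Fin μ → Fin n → Fin n → Fin n, IsMuWayLatinSquare L ∧ numFixed L = k}

theorem stmt_8 (L : Fin 4 → Fin 5 → Fin 5 → Fin 5)
    (hL : IsMuWayLatinSquare L) (i₁ i₂ : Fin 5) (hne : i₁ ≠ i₂) :
    ¬ (rowFixed L i₁ = 5 ∧ rowFixed L i₂ = 1) := by
  rintro ⟨h1, h2⟩
  obtain ⟨hrow, hcol, hcell⟩ := hL
  -- every cell of row i₁ is fixed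
  have hfix1 : ∀ j, IsFixedCell L i₁ j := by
    intro j
    have : (Finset.univ.filter fun j : Fin 5 => IsFixedCell L i₁ j) = Finset.univ := by
      apply Finset.eq_univ_of_card
      rw [Fintype.card_fin]; exact h1
    have hj : j ∈ (Finset.univ.filter fun j : Fin 5 => IsFixedCell L i₁ j) := by
      rw [this]; exact Finset.mem_univ j
    exact (Finset.mem_filter.mp hj).2
  -- the unique fixed cell in row i₂
  obtain ⟨j₀, hj₀⟩ := Finset.card_eq_one.mp h2
  have hfix0 : IsFixedCell L i₂ j₀ := by
    have : j₀ ∈ (Finset.univ.filter fun j : Fin 5 => IsFixedCell L i₂ j) := by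
      rw [hj₀]; exact Finset.mem_singleton_self j₀
    exact (Finset.mem_filter.mp this).2
  have hnotfix : ∀ j, j ≠ j₀ → ¬ IsFixedCell L i₂ j := by
    intro j hj hfix
    apply hj
    have : j ∈ (Finset.univ.filter fun j : Fin 5 => IsFixedCell L i₂ j) :=
      Finset.mem_filter.mpr ⟨Finset.mem_univ j, hfix⟩
    rw [hj₀] at this
    exact Finset.mem_singleton.mp this
  set w := L 0 i₂ j₀ with hw
  set v := fun j => L 0 i₁ j with hv
  have hvinj : Function.Injective v := hrow 0 i₁
  have hwv0 : w ≠ v j₀ := by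
    intro h
    exact hne ((hcol 0 j₀ h.symm))
  -- pick j₁ ≠ j₀ with v j₁ ≠ w
  have h10 : (j₀ + 1 : Fin 5) ≠ j₀ := by
    intro h
    have : (1 : Fin 5) = 0 := by
      have := add_left_cancel (a := j₀) (b := (1:Fin 5)) (c := 0) (by simpa using h)
      exact this
    exact absurd this (by decide)
  have h20 : (j₀ + 2 : Fin 5) ≠ j₀ := by
    intro h
    have : (2 : Fin 5) = 0 := add_left_cancel (a := j₀) (b := (2:Fin 5)) (c := 0) (by simpa using h)
    exact absurd this (by decide)
  have h12 : (j₀ + 1 : Fin 5) ≠ j₀ + 2 := by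
    intro h
    have : (1 : Fin 5) = 2 := add_left_cancel h
    exact absurd this (by decide)
  obtain ⟨j₁, hj₁0, hj₁w⟩ : ∃ j₁, j₁ ≠ j₀ ∧ v j₁ ≠ w := by
    by_cases hc : v (j₀ + 1) = w
    · refine ⟨j₀ + 2, h20, ?_⟩
      intro hc2
      exact h12 (hvinj (hc.trans hc2.symm))
    · exact ⟨j₀ + 1, h10, hc⟩
  -- column j₁ is non-fixed, so a ↦ L a i₂ j₁ is injective
  have hinj : Function.Injective (fun a => L a i₂ j₁) :=
    (hcell i₂ j₁).resolve_left (hnotfix j₁ hj₁0)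
  -- its image has card 4 and avoids v j₁, hence equals univ.erase (v j₁), which contains w
  have himage : Finset.image (fun a => L a i₂ j₁) Finset.univ =
      Finset.univ.erase (v j₁) := by
    apply Finset.eq_of_subset_of_card_le
    · intro x hx
      obtain ⟨a, _, ha⟩ := Finset.mem_image.mp hx
      refine Finset.mem_erase.mpr ⟨?_, Finset.mem_univ x⟩
      intro h
      -- L a i₂ j₁ = v j₁ = L 0 i₁ j₁ = L a i₁ j₁ (cell (i₁,j₁) fixed), contra column inj
      have hfa : L a i₁ j₁ = v j₁ := hfix1 j₁ a 0
      have : L a i₂ j₁ = L a i₁ j₁ := by rw [ha, h, hfa]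
      exact hne (hcol a j₁ this.symm)
    · rw [Finset.card_erase_of_mem (Finset.mem_univ _),
        Finset.card_image_of_injective _ hinj]
      simp
  have hwin : w ∈ Finset.image (fun a => L a i₂ j₁) Finset.univ := by
    rw [himage]
    exact Finset.mem_erase.mpr ⟨fun h => hj₁w h.symm, Finset.mem_univ w⟩
  obtain ⟨a, _, ha⟩ := Finset.mem_image.mp hwin
  -- but L a i₂ j₀ = w as well, contradicting row injectivity
  have ha0 : L a i₂ j₀ = w := hfix0 a 0
  exact hj₁0 (hrow a i₂ (ha.trans ha0.symm))
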